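/- Let F, G : ℂ → ℂ be complex-differentiable at a point z ∈ ℂ. For a real-differentiable function h : ℂ → ℝ write ∂ₓh(z) and ∂_yh(z) for the real directional derivatives of h at z in the directions 1 and i. Then the Jacobian determinant of the map w ↦ (Re F(w), Re G(w)) equals the Jacobian determinant of the map w ↦ (Im F(w), Im G(w)) at z; explicitly, (∂ₓ(Re∘F))·(∂_y(Re∘G)) − (∂_y(Re∘F))·(∂ₓ(Re∘G)) = (∂ₓ(Im∘F))·(∂_y(Im∘G)) − (∂_y(Im∘F))·(∂ₓ(Im∘G)) at z, and both sides equal Im(F′(z) · conj(G′(z))). -/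
import Mathlib


open Complex

lemma fderiv_re_apply (F : ℂ → ℂ) (z v : ℂ) (hF : DifferentiableAt ℂ F z) :
    fderiv ℝ (fun w => (F w).re) z v = (deriv F z * v).re := by
  have h1 : HasFDerivAt F (ContinuousLinearMap.restrictScalars ℝ
      (ContinuousLinearMap.smulRight (1 : ℂ →L[ℂ] ℂ) (deriv F z))) z := by
    have := hF.hasDerivAt.hasFDerivAt
    exact this.restrictScalars ℝ
  have h2 := (Complex.reCLM.hasFDerivAt.comp z h1).fderiv
  have : fderiv ℝ (fun w => (F w).re) z = Complex.reCLM.comp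
      (ContinuousLinearMap.restrictScalars ℝ (ContinuousLinearMap.smulRight (1 : ℂ →L[ℂ] ℂ) (deriv F z))) := h2
  rw [this]
  simp [mul_comm]

lemma fderiv_im_apply (F : ℂ → ℂ) (z v : ℂ) (hF : DifferentiableAt ℂ F z) :
    fderiv ℝ (fun w => (F w).im) z v = (deriv F z * v).im := by
  have h1 : HasFDerivAt F (ContinuousLinearMap.restrictScalars ℝ
      (ContinuousLinearMap.smulRight (1 : ℂ →L[ℂ] ℂ) (deriv F z))) z := by
    have := hF.hasDerivAt.hasFDerivAt
    exact this.restrictScalars ℝ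
  have h2 := (Complex.imCLM.hasFDerivAt.comp z h1).fderiv
  have : fderiv ℝ (fun w => (F w).im) z = Complex.imCLM.comp
      (ContinuousLinearMap.restrictScalars ℝ (ContinuousLinearMap.smulRight (1 : ℂ →L[ℂ] ℂ) (deriv F z))) := h2
  rw [this]
  simp [mul_comm]

/-- For `F, G : ℂ → ℂ` complex-differentiable at `z`, the Jacobian determinant of
`w ↦ (Re F w, Re G w)` equals that of `w ↦ (Im F w, Im G w)` at `z`, and both equal
`Im (F'(z) * conj (G'(z)))`. Here the real directional derivatives in the directions
`1` and `I` are expressed via `fderiv ℝ`. -/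
theorem jacobian_re_eq_jacobian_im (F G : ℂ → ℂ) (z : ℂ)
    (hF : DifferentiableAt ℂ F z) (hG : DifferentiableAt ℂ G z) :
    (fderiv ℝ (fun w => (F w).re) z 1) * (fderiv ℝ (fun w => (G w).re) z Complex.I)
      - (fderiv ℝ (fun w => (F w).re) z Complex.I) * (fderiv ℝ (fun w => (G w).re) z 1)
    = (fderiv ℝ (fun w => (F w).im) z 1) * (fderiv ℝ (fun w => (G w).im) z Complex.I)
      - (fderiv ℝ (fun w => (F w).im) z Complex.I) * (fderiv ℝ (fun w => (G w).im) z 1)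
    ∧
    (fderiv ℝ (fun w => (F w).re) z 1) * (fderiv ℝ (fun w => (G w).re) z Complex.I)
      - (fderiv ℝ (fun w => (F w).re) z Complex.I) * (fderiv ℝ (fun w => (G w).re) z 1)
    = (deriv F z * (starRingEnd ℂ) (deriv G z)).im := by
  rw [fderiv_re_apply F z 1 hF, fderiv_re_apply F z Complex.I hF,
      fderiv_re_apply G z 1 hG, fderiv_re_apply G z Complex.I hG,
      fderiv_im_apply F z 1 hF, fderiv_im_apply F z Complex.I hF,
      fderiv_im_apply G z 1 hG, fderiv_im_apply G z Complex.I hG]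
  simp [Complex.mul_re, Complex.mul_im]
  ring
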